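/- For every n ≥ 2, the number of permutations σ ∈ S_n with mmp^{(3≤max,∅,0,0)}(σ) = 0 equals 2·c(n,2), twice the number of permutations in S_n with exactly 2 cycles; that is, R_n^{(3≤max,∅,0,0)}(0) = 2·c(n,2). -/

import Mathlib

/-- `σ i` matches `MMP(k ≤ max, ∅, 0, 0)` in `σ`: none of the earlier entries
exceeds `σ i`, and, `σ m` being the maximum of the entries after position `i`,
at least `k` of the entries in positions `i+1, …, m` exceed `σ i`. -/
def kleMatch {n : ℕ} (k : ℕ) (σ : Equiv.Perm (Fin n)) (i : Fin n) : Prop :=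
  (∀ j, j < i → σ j < σ i) ∧
  ∃ m, i < m ∧ (∀ j, i < j → σ j ≤ σ m) ∧
    k ≤ (Finset.univ.filter (fun j => i < j ∧ j ≤ m ∧ σ i < σ j)).card

instance {n : ℕ} (k : ℕ) (σ : Equiv.Perm (Fin n)) (i : Fin n) :
    Decidable (kleMatch k σ i) := by
  unfold kleMatch; infer_instance

/-- `mmp^{(k ≤ max, ∅, 0, 0)}(σ)`. -/
def mmpKle {n : ℕ} (k : ℕ) (σ : Equiv.Perm (Fin n)) : ℕ :=
  (Finset.univ.filter (fun i => kleMatch k σ i)).card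

/-- `R_n^{(k ≤ max, ∅, 0, 0)}(x) = Σ_{σ ∈ S_n} x^{mmp^{(k ≤ max,∅,0,0)}(σ)}`. -/
noncomputable def RKle (k n : ℕ) : Polynomial ℤ :=
  ∑ σ : Equiv.Perm (Fin n), Polynomial.X ^ mmpKle k σ

/-- The number of cycles of `σ` (fixed points count as cycles). -/
def numCycles {n : ℕ} (σ : Equiv.Perm (Fin n)) : ℕ :=
  Multiset.card σ.cycleType + (Finset.univ.filter (fun x => σ x = x)).card

open Equiv Equiv.Perm Finset


namespace MmpAux

variable {n : ℕ}

/-- position of the largest value -/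
def topPos (σ : Perm (Fin (n + 1))) : Fin (n + 1) := σ⁻¹ (Fin.last n)

@[simp] lemma apply_topPos (σ : Perm (Fin (n + 1))) : σ (topPos σ) = Fin.last n :=
  Equiv.apply_symm_apply σ _

def bigCount (σ : Perm (Fin (n + 1))) : ℕ :=
  (Finset.univ.filter (fun j => j ≤ topPos σ ∧ σ 0 < σ j)).card

lemma match_iff (σ : Perm (Fin (n + 1))) : kleMatch 3 σ 0 ↔ 3 ≤ bigCount σ := by
  constructor
  · rintro ⟨-, m, hm0, hmax, hcard⟩
    have hne : (Finset.univ.filter (fun j => 0 < j ∧ j ≤ m ∧ σ 0 < σ j)).Nonempty :=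
      Finset.card_pos.mp (by omega)
    obtain ⟨j0, hj0⟩ := hne
    simp only [Finset.mem_filter, Finset.mem_univ, true_and] at hj0
    have hall : ∀ y, σ y ≤ σ m := by
      intro y
      rcases eq_or_ne y 0 with rfl | hy
      · exact le_of_lt (lt_of_lt_of_le hj0.2.2 (hmax j0 hj0.1))
      · exact hmax y (Fin.pos_iff_ne_zero.mpr hy)
    have hm : m = topPos σ := by
      have h1 : σ m = Fin.last n :=
        le_antisymm (Fin.le_last _) (by simpa using hall (topPos σ))
      have := congrArg σ.symm h1
      simpa [topPos] using this
    refine le_trans hcard (Finset.card_le_card ?_)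
    intro j hj
    simp only [Finset.mem_filter, Finset.mem_univ, true_and] at hj ⊢
    exact ⟨hm ▸ hj.2.1, hj.2.2⟩
  · intro h
    have hP : (0 : Fin (n + 1)) < topPos σ := by
      by_contra hc
      have hc0 : topPos σ = 0 := le_antisymm (not_lt.mp hc) (Fin.zero_le _)
      have : (Finset.univ.filter (fun j => j ≤ topPos σ ∧ σ 0 < σ j)) = ∅ := by
        apply Finset.filter_eq_empty_iff.mpr
        intro j _
        rintro ⟨h1, h2⟩
        rw [hc0, Fin.le_zero_iff] at h1
        subst h1; exact lt_irrefl _ h2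
      rw [bigCount, this] at h; simp at h
    refine ⟨fun j hj => absurd hj (Fin.not_lt_zero j), topPos σ, hP, ?_, ?_⟩
    · intro j _; simpa using Fin.le_last (σ j)
    · refine le_trans h (le_of_eq ?_)
      rw [bigCount]
      congr 1
      apply Finset.filter_congr
      intro j _
      constructor
      · rintro ⟨h1, h2⟩
        refine ⟨Fin.pos_iff_ne_zero.mpr ?_, h1, h2⟩
        rintro rfl; exact lt_irrefl _ h2
      · rintro ⟨_, h1, h2⟩; exact ⟨h1, h2⟩

lemma match_zero_of_match {σ : Perm (Fin (n + 1))} {i : Fin (n + 1)}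
    (h : kleMatch 3 σ i) : kleMatch 3 σ 0 := by
  obtain ⟨hL, m, him, hmax, hcard⟩ := h
  have hσ0i : σ 0 ≤ σ i := by
    rcases eq_or_ne i 0 with rfl | hi
    · exact le_refl _
    · exact le_of_lt (hL 0 (Fin.pos_iff_ne_zero.mpr hi))
  refine ⟨fun j hj => absurd hj (Fin.not_lt_zero j), m,
    lt_of_le_of_lt (Fin.zero_le i) him, ?_, ?_⟩
  · -- ∀ j, 0 < j → σ j ≤ σ m
    have hne : (Finset.univ.filter (fun j => i < j ∧ j ≤ m ∧ σ i < σ j)).Nonempty :=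
      Finset.card_pos.mp (by omega)
    obtain ⟨j0, hj0⟩ := hne
    simp only [Finset.mem_filter, Finset.mem_univ, true_and] at hj0
    have him' : σ i ≤ σ m := le_of_lt (lt_of_lt_of_le hj0.2.2 (hmax j0 hj0.1))
    intro j hj
    rcases lt_trichotomy j i with h1 | rfl | h1
    · exact le_of_lt (lt_of_lt_of_le (hL j h1) him')
    · exact him'
    · exact hmax j h1
  · refine le_trans hcard (Finset.card_le_card ?_)
    intro j hj
    simp only [Finset.mem_filter, Finset.mem_univ, true_and] at hj ⊢
    exact ⟨lt_of_le_of_lt (Fin.zero_le i) hj.1, hj.2.1,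
      lt_of_le_of_lt hσ0i hj.2.2⟩

lemma mmp_eq_zero_iff (σ : Perm (Fin (n + 1))) :
    mmpKle 3 σ = 0 ↔ bigCount σ ≤ 2 := by
  rw [mmpKle, Finset.card_eq_zero, Finset.filter_eq_empty_iff]
  constructor
  · intro h
    by_contra hc
    exact h (Finset.mem_univ 0) ((match_iff σ).mpr (by omega))
  · intro h i _ hi
    have := (match_iff σ).mp (match_zero_of_match hi)
    omega

variable {n : ℕ}

def ins (j : Fin (n + 1)) (τ : Perm (Fin n)) : Perm (Fin (n + 1)) :=
  (finSuccEquiv' j).trans ((Equiv.optionCongr τ).trans (finSuccEquiv' 0).symm)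

@[simp] lemma ins_apply_self (j : Fin (n + 1)) (τ : Perm (Fin n)) : ins j τ j = 0 := by
  simp [ins]

@[simp] lemma ins_apply_succAbove (j : Fin (n + 1)) (τ : Perm (Fin n)) (i : Fin n) :
    ins j τ (j.succAbove i) = (τ i).succ := by
  simp [ins, Equiv.optionCongr, Fin.zero_succAbove]

lemma ins_eq_zero_iff {j : Fin (n + 1)} {τ : Perm (Fin n)} {x : Fin (n + 1)} :
    ins j τ x = 0 ↔ x = j := by
  constructor
  · intro h
    by_contra hx
    obtain ⟨i, rfl⟩ := Fin.exists_succAbove_eq hx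
    rw [ins_apply_succAbove] at h
    exact Fin.succ_ne_zero _ h
  · rintro rfl; simp

lemma ins_injective :
    Function.Injective (fun x : Perm (Fin n) × Fin (n + 1) => ins x.2 x.1) := by
  rintro ⟨τ, j⟩ ⟨τ', j'⟩ h
  simp only at h
  have hj : j = j' := by
    have := ins_eq_zero_iff (j := j') (τ := τ') (x := j)
    rw [← h] at this
    exact this.mp (ins_apply_self j τ)
  subst hj
  have hτ : τ = τ' := by
    apply Equiv.ext
    intro i
    have h1 : ins j τ (j.succAbove i) = ins j τ' (j.succAbove i) := by rw [h]
    rw [ins_apply_succAbove, ins_apply_succAbove] at h1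
    exact Fin.succ_injective _ h1
  rw [hτ]

noncomputable def insEquiv : Perm (Fin n) × Fin (n + 1) ≃ Perm (Fin (n + 1)) :=
  Equiv.ofBijective _ ((Fintype.bijective_iff_injective_and_card
    (fun x : Perm (Fin n) × Fin (n + 1) => ins x.2 x.1)).mpr
    ⟨ins_injective, by
      simp [Fintype.card_perm, Fintype.card_prod, Nat.factorial_succ, Nat.mul_comm]⟩)

@[simp] lemma insEquiv_apply (x : Perm (Fin n) × Fin (n + 1)) :
    insEquiv x = ins x.2 x.1 := rfl

variable {n : ℕ}
variable {n : ℕ}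

lemma topPos_ins (j : Fin (n + 2)) (τ : Perm (Fin (n + 1))) :
    topPos (ins j τ) = j.succAbove (topPos τ) := by
  have h : ins j τ (j.succAbove (topPos τ)) = Fin.last (n + 1) := by
    rw [ins_apply_succAbove, apply_topPos, Fin.succ_last]
  rw [topPos]
  exact (Equiv.Perm.eq_inv_iff_eq.mpr h).symm

lemma bigCount_ins_ne_zero (j : Fin (n + 2)) (τ : Perm (Fin (n + 1))) (hj : j ≠ 0) :
    bigCount (ins j τ) = bigCount τ := by
  rw [bigCount, bigCount]
  refine (Finset.card_bij (fun (i : Fin (n+1)) _ => j.succAbove i) ?_ ?_ ?_).symm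
  · intro i hi
    simp only [Finset.mem_filter, Finset.mem_univ, true_and] at hi ⊢
    rw [topPos_ins]
    constructor
    · exact (Fin.succAbove_le_succAbove_iff (p := j)).mpr hi.1
    · have h0 : ins j τ 0 = (τ 0).succ := by
        rw [← Fin.succAbove_ne_zero_zero hj, ins_apply_succAbove]
      rw [h0, ins_apply_succAbove, Fin.succ_lt_succ_iff]
      exact hi.2
  · intro a _ b _ hab
    exact Fin.succAbove_right_injective hab
  · intro x hx
    simp only [Finset.mem_filter, Finset.mem_univ, true_and] at hx
    have hxj : x ≠ j := by
      intro h
      rw [h, ins_apply_self] at hx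
      exact absurd hx.2 (by simp [Fin.not_lt_zero, Fin.le_zero_iff])
    obtain ⟨i, rfl⟩ := Fin.exists_succAbove_eq hxj
    refine ⟨i, ?_, rfl⟩
    simp only [Finset.mem_filter, Finset.mem_univ, true_and]
    rw [topPos_ins] at hx
    have h0 : ins j τ 0 = (τ 0).succ := by
      rw [← Fin.succAbove_ne_zero_zero hj, ins_apply_succAbove]
    rw [h0, ins_apply_succAbove, Fin.succ_lt_succ_iff] at hx
    exact ⟨(Fin.succAbove_le_succAbove_iff (p := j)).mp hx.1, hx.2⟩

lemma bigCount_ins_zero (τ : Perm (Fin (n + 1))) :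
    bigCount (ins 0 τ) = (topPos τ : ℕ) + 1 := by
  rw [bigCount]
  have htop : topPos (ins 0 τ) = (topPos τ).succ := by
    rw [topPos_ins, Fin.zero_succAbove]
  have hfe : (Finset.univ.filter
      (fun x => x ≤ topPos (ins 0 τ) ∧ ins 0 τ 0 < ins 0 τ x)) =
      Finset.Ioc 0 ((topPos τ).succ) := by
    ext x
    simp only [Finset.mem_filter, Finset.mem_univ, true_and, Finset.mem_Ioc, htop]
    have h00 : ins 0 τ 0 = 0 := ins_apply_self 0 τ
    rw [h00]
    constructor
    · rintro ⟨h1, h2⟩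
      refine ⟨?_, h1⟩
      have : ins 0 τ x ≠ 0 := Fin.pos_iff_ne_zero.mp h2
      have hx0 : x ≠ 0 := fun hc => this (by rw [hc]; exact ins_apply_self 0 τ)
      exact Fin.pos_iff_ne_zero.mpr hx0
    · rintro ⟨h1, h2⟩
      refine ⟨h2, ?_⟩
      have hx0 : x ≠ 0 := Fin.pos_iff_ne_zero.mp h1
      have : ins 0 τ x ≠ 0 := fun hc => hx0 (ins_eq_zero_iff.mp hc)
      exact Fin.pos_iff_ne_zero.mpr this
  rw [hfe, Fin.card_Ioc]
  simp


lemma card_filter_equiv {α β : Type*} [Fintype α] [DecidableEq α] [Fintype β] [DecidableEq β]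
    (e : α ≃ β) (p : β → Prop) [DecidablePred p] :
    (Finset.univ.filter fun a => p (e a)).card = (Finset.univ.filter p).card := by
  rw [← Finset.univ_map_equiv_to_embedding e, Finset.filter_map, Finset.card_map]
  rfl

def Acnt (m : ℕ) : ℕ := (Finset.univ.filter fun σ : Perm (Fin m) => mmpKle 3 σ = 0).card

def Tcnt (m : ℕ) : ℕ :=
  (Finset.univ.filter fun τ : Perm (Fin (m + 1)) => ((topPos τ : ℕ) ≤ 1)).card

lemma Acnt_succ (n : ℕ) : Acnt (n + 2) = (n + 1) * Acnt (n + 1) + Tcnt n := by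
  rw [Acnt, ← card_filter_equiv (insEquiv (n := n + 1)) (fun σ => mmpKle 3 σ = 0),
    Finset.card_filter, Fintype.sum_prod_type_right, Fin.sum_univ_succ]
  have h0 : (∑ τ : Perm (Fin (n + 1)),
      if mmpKle 3 (insEquiv (τ, (0 : Fin (n + 2)))) = 0 then 1 else 0) = Tcnt n := by
    rw [Tcnt, Finset.card_filter]
    apply Finset.sum_congr rfl
    intro τ _
    apply if_congr _ rfl rfl
    rw [show insEquiv (τ, (0 : Fin (n + 2))) = ins 0 τ from rfl, mmp_eq_zero_iff,
      bigCount_ins_zero]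
    omega
  have h1 : ∀ i : Fin (n + 1), (∑ τ : Perm (Fin (n + 1)),
      if mmpKle 3 (insEquiv (τ, (i.succ : Fin (n + 2)))) = 0 then 1 else 0) = Acnt (n + 1) := by
    intro i
    rw [Acnt, Finset.card_filter]
    apply Finset.sum_congr rfl
    intro τ _
    apply if_congr _ rfl rfl
    rw [show insEquiv (τ, (i.succ : Fin (n + 2))) = ins i.succ τ from rfl, mmp_eq_zero_iff,
      bigCount_ins_ne_zero _ _ (Fin.succ_ne_zero i), mmp_eq_zero_iff]
  rw [h0]
  rw [Finset.sum_congr rfl (fun i _ => h1 i), Finset.sum_const, Finset.card_univ,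
    Fintype.card_fin]
  ring

lemma card_filter_apply_eq (N : ℕ) (c v : Fin (N + 1)) :
    (Finset.univ.filter fun τ : Perm (Fin (N + 1)) => τ c = v).card = N.factorial := by
  have h1 : (Finset.univ.filter fun τ : Perm (Fin (N + 1)) => τ 0 = v).card
      = (Finset.univ.filter fun τ : Perm (Fin (N + 1)) => τ c = v).card := by
    rw [← card_filter_equiv (Equiv.mulRight (Equiv.swap (0 : Fin (N+1)) c))
      (fun τ : Perm (Fin (N + 1)) => τ c = v)]
    congr 1
    apply Finset.filter_congr
    intro τ _
    simp [Equiv.Perm.mul_apply, Equiv.swap_apply_right]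
  rw [← h1, ← card_filter_equiv (Equiv.Perm.decomposeFin.symm)
    (fun τ : Perm (Fin (N + 1)) => τ 0 = v)]
  have h2 : ∀ x : Fin (N + 1) × Perm (Fin N),
      (Equiv.Perm.decomposeFin.symm x 0 = v) ↔ x.1 = v := by
    rintro ⟨p, e⟩
    rw [Equiv.Perm.decomposeFin_symm_apply_zero]
  rw [Finset.filter_congr (fun x _ => by rw [h2 x]), Finset.card_filter,
    Fintype.sum_prod_type]
  have h3 : ∀ p : Fin (N + 1),
      (∑ _e : Perm (Fin N), if p = v then 1 else 0) = if p = v then N.factorial else 0 := by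
    intro p
    by_cases h : p = v <;>
      simp [h, Finset.sum_const, Finset.card_univ, Fintype.card_perm, Fintype.card_fin]
  rw [Finset.sum_congr rfl (fun p _ => h3 p), Finset.sum_ite_eq' Finset.univ v]
  simp

lemma Tcnt_eq (m : ℕ) : Tcnt (m + 1) = 2 * (m + 1).factorial := by
  have hcong : ∀ τ : Perm (Fin (m + 2)),
      ((topPos τ : ℕ) ≤ 1) ↔ (τ 0 = Fin.last (m + 1) ∨ τ 1 = Fin.last (m + 1)) := by
    intro τ
    constructor
    · intro h
      have : topPos τ = 0 ∨ topPos τ = 1 := by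
        rcases Nat.le_one_iff_eq_zero_or_eq_one.mp h with h' | h'
        · left; exact Fin.ext (by simpa using h')
        · right; exact Fin.ext (by simpa using h')
      rcases this with h' | h'
      · left; rw [← h', apply_topPos]
      · right; rw [← h', apply_topPos]
    · intro h
      rcases h with h | h
      · have : topPos τ = 0 := by rw [topPos, Equiv.Perm.inv_eq_iff_eq, h]
        simp [this]
      · have : topPos τ = 1 := by rw [topPos, Equiv.Perm.inv_eq_iff_eq, h]
        simp [this]
  rw [Tcnt, Finset.filter_congr (fun τ _ => by rw [hcong τ]), Finset.filter_or,
    Finset.card_union_of_disjoint, card_filter_apply_eq, card_filter_apply_eq]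
  · ring
  · rw [Finset.disjoint_filter]
    intro τ _ h1 h2
    have h01 : (0 : Fin (m + 2)) ≠ 1 := by
      intro hc
      simpa using congrArg Fin.val hc
    exact h01 (τ.injective (h1.trans h2.symm))

lemma Acnt_one : Acnt 1 = 1 := by
  rw [Acnt]
  have h : ∀ σ : Perm (Fin 1), mmpKle 3 σ = 0 := by
    intro σ
    rw [mmpKle, Finset.card_eq_zero, Finset.filter_eq_empty_iff]
    rintro i - ⟨-, m, him, -⟩
    exact absurd (Subsingleton.elim i m) (ne_of_lt him)
  rw [Finset.filter_true_of_mem (fun σ _ => h σ), Finset.card_univ, Fintype.card_perm,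
    Fintype.card_fin]
  rfl

lemma Tcnt_zero : Tcnt 0 = 1 := by
  rw [Tcnt]
  have h : ∀ τ : Perm (Fin 1), ((topPos τ : ℕ) ≤ 1) := by
    intro τ; omega
  rw [Finset.filter_true_of_mem (fun τ _ => h τ), Finset.card_univ, Fintype.card_perm,
    Fintype.card_fin]
  rfl

end MmpAux


namespace CycAux

lemma shorten {α : Type*} [Fintype α] [DecidableEq α] (σ : Perm α) (x : α) (hx : σ x ≠ x) :
    Multiset.card (Equiv.swap x (σ x) * σ).cycleType
      + (Finset.univ.filter fun y => (Equiv.swap x (σ x) * σ) y = y).card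
    = Multiset.card σ.cycleType + (Finset.univ.filter fun y => σ y = y).card + 1 := by
  classical
  set τ := Equiv.swap x (σ x) * σ with hτ
  by_cases h2 : σ (σ x) = x
  · -- x lies in a 2-cycle of σ
    have hστ : σ = Equiv.swap x (σ x) * τ := by
      rw [hτ, ← mul_assoc, Equiv.swap_mul_self, one_mul]
    have hτx : τ x = x := by
      rw [hτ, mul_apply, Equiv.swap_apply_right]
    have hτsx : τ (σ x) = σ x := by
      rw [hτ, mul_apply, h2, Equiv.swap_apply_left]
    have hdisj : (Equiv.swap x (σ x)).Disjoint τ := by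
      intro y
      by_cases hy : y = x ∨ y = σ x
      · right; rcases hy with rfl | rfl
        · exact hτx
        · exact hτsx
      · left; push_neg at hy; exact Equiv.swap_apply_of_ne_of_ne hy.1 hy.2
    have hct : σ.cycleType = (Equiv.swap x (σ x)).cycleType + τ.cycleType := by
      conv_lhs => rw [hστ]
      exact hdisj.cycleType_mul
    have hcsw : Multiset.card (Equiv.swap x (σ x)).cycleType = 1 := by
      rw [(isCycle_swap (Ne.symm hx)).cycleType]; rfl
    have hfix : (Finset.univ.filter fun y => τ y = y)
        = insert x (insert (σ x) (Finset.univ.filter fun y => σ y = y)) := by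
      ext y
      simp only [Finset.mem_insert, Finset.mem_filter, Finset.mem_univ, true_and]
      constructor
      · intro hy
        rcases eq_or_ne y x with rfl | h1
        · left; rfl
        rcases eq_or_ne y (σ x) with rfl | h3
        · right; left; rfl
        right; right
        rw [hτ, mul_apply] at hy
        rcases eq_or_ne (σ y) x with h4 | h4
        · rw [h4, Equiv.swap_apply_left] at hy; exact absurd hy.symm h3
        rcases eq_or_ne (σ y) (σ x) with h5 | h5
        · exact absurd (σ.injective h5) h1
        · rwa [Equiv.swap_apply_of_ne_of_ne h4 h5] at hy
      · intro hy
        rcases hy with rfl | rfl | hy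
        · exact hτx
        · exact hτsx
        · rw [hτ, mul_apply, hy]
          apply Equiv.swap_apply_of_ne_of_ne
          · rintro rfl; exact hx hy
          · rintro rfl; exact hx (h2.symm.trans hy).symm
    have hxmem : x ∉ insert (σ x) (Finset.univ.filter fun y => σ y = y) := by
      simp only [Finset.mem_insert, Finset.mem_filter, Finset.mem_univ, true_and]
      push_neg
      exact ⟨Ne.symm hx, hx⟩
    have hsxmem : σ x ∉ (Finset.univ.filter fun y => σ y = y) := by
      simp only [Finset.mem_filter, Finset.mem_univ, true_and]
      rw [h2]; exact Ne.symm hx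
    have hcard : Multiset.card σ.cycleType = 1 + Multiset.card τ.cycleType := by
      rw [hct, Multiset.card_add, hcsw]
    rw [hfix, Finset.card_insert_of_notMem hxmem, Finset.card_insert_of_notMem hsxmem]
    omega
  · -- x lies in a cycle of length ≥ 3
    set c := σ.cycleOf x with hc0
    have hxsup : x ∈ σ.support := mem_support.mpr hx
    have hcmem : c ∈ σ.cycleFactorsFinset := cycleOf_mem_cycleFactorsFinset_iff.mpr hxsup
    have hdisj : (σ * c⁻¹).Disjoint c := disjoint_mul_inv_of_mem_cycleFactorsFinset hcmem
    have hfact : (σ * c⁻¹) * c = σ := inv_mul_cancel_right σ c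
    have hcx : c x = σ x := σ.cycleOf_apply_self x
    have hccx : c (σ x) = σ (σ x) := by
      rw [hc0, Equiv.Perm.cycleOf_apply]
      exact if_pos (Equiv.Perm.sameCycle_apply_right.mpr (Equiv.Perm.SameCycle.refl σ x))
    have hc : c.IsCycle := isCycle_cycleOf σ hx
    have hcxx : c x ≠ x := by rw [hcx]; exact hx
    have hccx' : c (c x) ≠ x := by rw [hcx, hccx]; exact h2
    have hc' : (Equiv.swap x (σ x) * c).IsCycle := by
      have := hc.swap_mul hcxx hccx'
      rwa [hcx] at this
    have hsxsupc : σ x ∈ c.support := by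
      apply mem_support.mpr; rw [hccx]
      intro hcon; exact hx (σ.injective hcon)
    have hdisj2 : (σ * c⁻¹).Disjoint (Equiv.swap x (σ x)) := by
      intro y
      by_cases hy : y = x ∨ y = σ x
      · left
        rcases hdisj y with h | h
        · exact h
        · exfalso; rcases hy with rfl | rfl
          · exact hcxx h
          · exact (mem_support.mp hsxsupc) h
      · right; push_neg at hy; exact Equiv.swap_apply_of_ne_of_ne hy.1 hy.2
    have hdisj3 : (σ * c⁻¹).Disjoint (Equiv.swap x (σ x) * c) := by
      intro y
      rcases hdisj y with h | h
      · left; exact h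
      · rcases hdisj2 y with h' | h'
        · left; exact h'
        · right; rw [mul_apply, h, h']
    have hτ2 : τ = (σ * c⁻¹) * (Equiv.swap x (σ x) * c) := by
      have hcomm : Commute (σ * c⁻¹) (Equiv.swap x (σ x)) := hdisj2.commute
      calc τ = Equiv.swap x (σ x) * σ := hτ
        _ = Equiv.swap x (σ x) * ((σ * c⁻¹) * c) := by rw [hfact]
        _ = (σ * c⁻¹) * (Equiv.swap x (σ x) * c) := by
            rw [← mul_assoc, ← hcomm.eq, mul_assoc]
    have hctτ : τ.cycleType = (σ * c⁻¹).cycleType + (Equiv.swap x (σ x) * c).cycleType := by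
      rw [hτ2]; exact hdisj3.cycleType_mul
    have hctσ : σ.cycleType = (σ * c⁻¹).cycleType + c.cycleType := by
      conv_lhs => rw [← hfact]
      exact hdisj.cycleType_mul
    have hcards : Multiset.card τ.cycleType = Multiset.card σ.cycleType := by
      rw [hctτ, hctσ, Multiset.card_add, Multiset.card_add, hc'.cycleType, hc.cycleType]
      simp
    have hfix : (Finset.univ.filter fun y => τ y = y)
        = insert x (Finset.univ.filter fun y => σ y = y) := by
      ext y
      simp only [Finset.mem_insert, Finset.mem_filter, Finset.mem_univ, true_and]
      constructor
      · intro hy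
        rcases eq_or_ne y x with rfl | h1
        · left; rfl
        right
        rw [hτ, mul_apply] at hy
        rcases eq_or_ne (σ y) x with h4 | h4
        · rw [h4, Equiv.swap_apply_left] at hy
          exfalso
          apply h2
          rw [hy]
          exact h4
        rcases eq_or_ne (σ y) (σ x) with h5 | h5
        · exact absurd (σ.injective h5) h1
        · rwa [Equiv.swap_apply_of_ne_of_ne h4 h5] at hy
      · intro hy
        rcases hy with rfl | hy
        · rw [hτ, mul_apply, Equiv.swap_apply_right]
        · rw [hτ, mul_apply, hy]
          apply Equiv.swap_apply_of_ne_of_ne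
          · rintro rfl; exact hx hy
          · rintro rfl; exact hx (σ.injective hy)
    have hxmem : x ∉ (Finset.univ.filter fun y => σ y = y) := by
      simp only [Finset.mem_filter, Finset.mem_univ, true_and]
      exact hx
    rw [hfix, Finset.card_insert_of_notMem hxmem]
    omega


variable {n : ℕ}

def succEquivNeZero (n : ℕ) : Fin n ≃ {x : Fin (n + 1) // x ≠ 0} where
  toFun i := ⟨i.succ, Fin.succ_ne_zero i⟩
  invFun x := (x : Fin (n + 1)).pred x.2
  left_inv i := by simp
  right_inv x := by
    apply Subtype.ext
    simp

lemma decomposeFin_zero_eq_extend (e : Perm (Fin n)) :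
    Equiv.Perm.decomposeFin.symm (0, e) = e.extendDomain (succEquivNeZero n) := by
  apply Equiv.ext
  intro y
  refine Fin.cases ?_ (fun i => ?_) y
  · rw [Equiv.Perm.decomposeFin_symm_apply_zero,
      e.extendDomain_apply_not_subtype (succEquivNeZero n) (by simp)]
  · rw [Equiv.Perm.decomposeFin_symm_apply_succ,
      e.extendDomain_apply_subtype (succEquivNeZero n) (Fin.succ_ne_zero i)]
    simp [succEquivNeZero]

lemma numCycles_decomposeFin_zero (e : Perm (Fin n)) :
    numCycles (Equiv.Perm.decomposeFin.symm (0, e)) = numCycles e + 1 := by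
  rw [numCycles, numCycles]
  have hct : (Equiv.Perm.decomposeFin.symm (0, e)).cycleType = e.cycleType := by
    rw [decomposeFin_zero_eq_extend]
    exact Equiv.Perm.cycleType_extendDomain (succEquivNeZero n)
  have hfix : (Finset.univ.filter
      fun y : Fin (n + 1) => Equiv.Perm.decomposeFin.symm (0, e) y = y).card
      = (Finset.univ.filter fun i : Fin n => e i = i).card + 1 := by
    rw [Finset.card_filter, Finset.card_filter, Fin.sum_univ_succ]
    have h0 : (if Equiv.Perm.decomposeFin.symm ((0 : Fin (n+1)), e) 0 = 0 then 1 else 0) = 1 :=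
      if_pos (Equiv.Perm.decomposeFin_symm_apply_zero 0 e)
    have hs : ∀ i : Fin n,
        (if Equiv.Perm.decomposeFin.symm ((0 : Fin (n+1)), e) i.succ = i.succ then 1 else 0)
        = if e i = i then 1 else 0 := by
      intro i
      apply if_congr _ rfl rfl
      rw [Equiv.Perm.decomposeFin_symm_apply_succ]
      simp [Fin.succ_inj]
    rw [h0, Finset.sum_congr rfl (fun i _ => hs i)]
    omega
  rw [hct, hfix]
  omega

lemma numCycles_decomposeFin (p : Fin (n + 1)) (e : Perm (Fin n)) :
    numCycles (Equiv.Perm.decomposeFin.symm (p, e))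
      = numCycles e + if p = 0 then 1 else 0 := by
  by_cases hp : p = 0
  · subst hp
    rw [numCycles_decomposeFin_zero, if_pos rfl]
  · rw [if_neg hp]
    set σp := Equiv.Perm.decomposeFin.symm (p, e) with hσp
    have h0 : σp 0 = p := Equiv.Perm.decomposeFin_symm_apply_zero p e
    have hx : σp 0 ≠ 0 := by rw [h0]; exact hp
    have hkey : Equiv.swap 0 (σp 0) * σp = Equiv.Perm.decomposeFin.symm (0, e) := by
      rw [h0]
      apply Equiv.ext
      intro y
      refine Fin.cases ?_ (fun i => ?_) y
      · rw [mul_apply, Equiv.Perm.decomposeFin_symm_apply_zero,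
          Equiv.Perm.decomposeFin_symm_apply_zero, Equiv.swap_apply_right]
      · rw [mul_apply, Equiv.Perm.decomposeFin_symm_apply_succ,
          Equiv.Perm.decomposeFin_symm_apply_succ, Equiv.swap_apply_self]
        simp
    have hsh := shorten σp 0 hx
    rw [hkey] at hsh
    have := numCycles_decomposeFin_zero e
    rw [numCycles] at this ⊢
    omega


lemma card_filter_equiv' {α β : Type*} [Fintype α] [DecidableEq α] [Fintype β] [DecidableEq β]
    (e : α ≃ β) (p : β → Prop) [DecidablePred p] :
    (Finset.univ.filter fun a => p (e a)).card = (Finset.univ.filter p).card := by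
  rw [← Finset.univ_map_equiv_to_embedding e, Finset.filter_map, Finset.card_map]
  rfl

def Ccnt (k m : ℕ) : ℕ := (Finset.univ.filter fun σ : Perm (Fin m) => numCycles σ = k).card

lemma Ccnt_succ (k m : ℕ) : Ccnt (k + 1) (m + 1) = Ccnt k m + m * Ccnt (k + 1) m := by
  rw [Ccnt, ← card_filter_equiv' (Equiv.Perm.decomposeFin.symm)
    (fun σ : Perm (Fin (m + 1)) => numCycles σ = k + 1),
    Finset.card_filter, Fintype.sum_prod_type, Fin.sum_univ_succ]
  have h0 : (∑ e : Perm (Fin m),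
      if numCycles (Equiv.Perm.decomposeFin.symm ((0 : Fin (m + 1)), e)) = k + 1
        then 1 else 0) = Ccnt k m := by
    rw [Ccnt, Finset.card_filter]
    apply Finset.sum_congr rfl
    intro e _
    apply if_congr _ rfl rfl
    rw [numCycles_decomposeFin, if_pos rfl]
    omega
  have h1 : ∀ i : Fin m, (∑ e : Perm (Fin m),
      if numCycles (Equiv.Perm.decomposeFin.symm ((i.succ : Fin (m + 1)), e)) = k + 1
        then 1 else 0) = Ccnt (k + 1) m := by
    intro i
    rw [Ccnt, Finset.card_filter]
    apply Finset.sum_congr rfl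
    intro e _
    apply if_congr _ rfl rfl
    rw [numCycles_decomposeFin, if_neg (Fin.succ_ne_zero i)]
    omega
  rw [h0, Finset.sum_congr rfl (fun i _ => h1 i), Finset.sum_const, Finset.card_univ,
    Fintype.card_fin]
  ring

lemma numCycles_pos (σ : Perm (Fin (n + 1))) : 1 ≤ numCycles σ := by
  rw [numCycles]
  by_cases h : σ = 1
  · subst h
    have : (Finset.univ.filter fun x : Fin (n + 1) => (1 : Perm (Fin (n+1))) x = x) =
        Finset.univ := Finset.filter_true_of_mem (fun x _ => rfl)
    rw [this, Finset.card_univ, Fintype.card_fin]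
    omega
  · have : 0 < Multiset.card σ.cycleType := Equiv.Perm.card_cycleType_pos.mpr h
    omega

lemma Ccnt_zero_succ (m : ℕ) : Ccnt 0 (m + 1) = 0 := by
  rw [Ccnt, Finset.card_eq_zero, Finset.filter_eq_empty_iff]
  intro σ _
  have := numCycles_pos σ
  omega

lemma Ccnt_one_one : Ccnt 1 1 = 1 := by
  rw [Ccnt]
  have h : ∀ σ : Perm (Fin 1), numCycles σ = 1 := by
    intro σ
    have hσ : σ = 1 := by
      apply Equiv.ext
      intro x
      exact Subsingleton.elim _ _
    subst hσ
    rw [numCycles, Equiv.Perm.cycleType_one]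
    have : (Finset.univ.filter fun x : Fin 1 => (1 : Perm (Fin 1)) x = x) =
        Finset.univ := Finset.filter_true_of_mem (fun x _ => rfl)
    rw [this]
    rfl
  rw [Finset.filter_true_of_mem (fun σ _ => h σ), Finset.card_univ, Fintype.card_perm,
    Fintype.card_fin]
  rfl

lemma Ccnt_two_one : Ccnt 2 1 = 0 := by
  rw [Ccnt, Finset.card_eq_zero, Finset.filter_eq_empty_iff]
  intro σ _
  have h : ∀ σ' : Perm (Fin 1), numCycles σ' = 1 := by
    intro σ'
    have hσ : σ' = 1 := by
      apply Equiv.ext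
      intro x
      exact Subsingleton.elim _ _
    subst hσ
    rw [numCycles, Equiv.Perm.cycleType_one]
    have : (Finset.univ.filter fun x : Fin 1 => (1 : Perm (Fin 1)) x = x) =
        Finset.univ := Finset.filter_true_of_mem (fun x _ => rfl)
    rw [this]
    rfl
  rw [h σ]
  omega

lemma Ccnt_one (m : ℕ) : Ccnt 1 (m + 1) = m.factorial := by
  induction m with
  | zero => exact Ccnt_one_one
  | succ k ih =>
    rw [Ccnt_succ, ih, Ccnt_zero_succ, Nat.factorial_succ]
    omega

end CycAux


open MmpAux CycAux in
lemma mmp_main_ind : ∀ m : ℕ, 1 ≤ m → Acnt (m + 1) = 2 * Ccnt 2 (m + 1) := by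
  intro m
  induction m with
  | zero => omega
  | succ k ih =>
    intro _
    rcases Nat.eq_zero_or_pos k with rfl | hk
    · show Acnt (0 + 2) = 2 * Ccnt 2 2
      rw [Acnt_succ 0, Acnt_one, Tcnt_zero]
      have : Ccnt 2 2 = Ccnt 1 1 + 1 * Ccnt 2 1 := Ccnt_succ 1 1
      rw [this, Ccnt_one_one, Ccnt_two_one]
    · obtain ⟨j, rfl⟩ : ∃ j, k = j + 1 := ⟨k - 1, by omega⟩
      show Acnt ((j + 1) + 2) = 2 * Ccnt 2 ((j + 1) + 2)
      rw [Acnt_succ (j + 1), ih (by omega), Tcnt_eq j,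
        Ccnt_succ 1 (j + 2), Ccnt_one (j + 1)]
      ring

theorem stmt_13 (n : ℕ) (hn : 2 ≤ n) :
    (Finset.univ.filter (fun σ : Equiv.Perm (Fin n) => mmpKle 3 σ = 0)).card =
      2 * (Finset.univ.filter (fun σ : Equiv.Perm (Fin n) => numCycles σ = 2)).card ∧
    (RKle 3 n).eval 0 =
      (2 * (Finset.univ.filter (fun σ : Equiv.Perm (Fin n) => numCycles σ = 2)).card : ℤ) := by
  obtain ⟨m, rfl⟩ : ∃ m, n = m + 2 := ⟨n - 2, by omega⟩
  have hA : (Finset.univ.filter (fun σ : Equiv.Perm (Fin (m + 2)) => mmpKle 3 σ = 0)).card =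
      2 * (Finset.univ.filter (fun σ : Equiv.Perm (Fin (m + 2)) => numCycles σ = 2)).card :=
    mmp_main_ind (m + 1) (by omega)
  refine ⟨hA, ?_⟩
  rw [RKle, Polynomial.eval_finset_sum]
  have hterm : ∀ σ : Equiv.Perm (Fin (m + 2)),
      (Polynomial.X ^ mmpKle 3 σ : Polynomial ℤ).eval 0
      = if mmpKle 3 σ = 0 then 1 else 0 := by
    intro σ
    rw [Polynomial.eval_pow, Polynomial.eval_X, zero_pow_eq]
  rw [Finset.sum_congr rfl (fun σ _ => hterm σ), Finset.sum_boole, hA]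
  push_cast
  ring
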